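/- arXiv:0710.3844 — 5 statements merged into one kernel-verified Lean document; each statement's English description precedes it below -/
import Mathlib

section
/- For n ≥ 1, matrix–vector multiplication by elements of Sp(n) preserves the unit sphere S^{4n−1} ⊂ ℍⁿ, and the resulting action is transitive: for any u, w ∈ S^{4n−1} there exists A ∈ Sp(n) with A·u = w. -/
open Matrix

/-- `ℍ` denotes the real quaternions. -/
abbrev HQ : Type := Quaternion ℝ

namespace SpAux

lemma mul_one_comm {n : ℕ} {A B : Matrix (Fin n) (Fin n) HQ} (h : A * B = 1) :
    B * A = 1 := by
  have hgf : ∀ x : Fin n → HQ, B.vecMulLinear (A.vecMulLinear x) = x := by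
    intro x
    simp [Matrix.vecMul_vecMul, h]
  have hinj : Function.Injective A.vecMulLinear :=
    Function.LeftInverse.injective hgf
  have hsurj : Function.Surjective A.vecMulLinear :=
    LinearMap.injective_iff_surjective.mp hinj
  have hfg : ∀ y : Fin n → HQ, A.vecMulLinear (B.vecMulLinear y) = y := by
    intro y
    obtain ⟨x, rfl⟩ := hsurj y
    rw [hgf]
  refine Matrix.ext fun i j => ?_
  have h2 : (Pi.single i 1 ᵥ* B) ᵥ* A = Pi.single i 1 := hfg (Pi.single i 1)
  rw [Matrix.vecMul_vecMul, Matrix.single_one_vecMul] at h2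
  rw [show (B * A) i j = (B * A).row i j from rfl, h2]
  simp [Matrix.one_apply, Pi.single_apply, eq_comm]

lemma dot_eq {n : ℕ} (v : Fin n → HQ) :
    star v ⬝ᵥ v = ((∑ i, ‖v i‖ ^ 2 : ℝ) : HQ) := by
  rw [← Quaternion.algebraMap_def, map_sum]
  simp only [dotProduct, Pi.star_apply, Quaternion.star_mul_self,
    Quaternion.algebraMap_def]
  refine Finset.sum_congr rfl fun i _ => ?_
  exact congrArg _ (by rw [Quaternion.normSq_eq_norm_mul_self, sq])

lemma isometry {n : ℕ} {A : Matrix (Fin n) (Fin n) HQ} (h : Aᴴ * A = 1)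
    (u : Fin n → HQ) : ∑ i, ‖A.mulVec u i‖ ^ 2 = ∑ i, ‖u i‖ ^ 2 := by
  have key : star (A *ᵥ u) ⬝ᵥ (A *ᵥ u) = star u ⬝ᵥ u := by
    rw [Matrix.star_mulVec, Matrix.dotProduct_mulVec, Matrix.vecMul_vecMul, h,
      Matrix.vecMul_one]
  rw [dot_eq, dot_eq] at key
  exact Quaternion.coe_injective key

noncomputable def outer {n : ℕ} (v : Fin n → HQ) : Matrix (Fin n) (Fin n) HQ :=
  Matrix.of fun i j => v i * star (v j)

noncomputable def hh {n : ℕ} (s : ℝ) (v : Fin n → HQ) : Matrix (Fin n) (Fin n) HQ :=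
  1 - (2 / s) • outer v

lemma hh_conjTranspose {n : ℕ} (s : ℝ) (v : Fin n → HQ) : (hh s v)ᴴ = hh s v := by
  refine Matrix.ext fun i j => ?_
  simp [hh, outer, Matrix.conjTranspose_apply, Matrix.one_apply, StarMul.star_mul,
    Quaternion.star_smul, apply_ite, eq_comm, Matrix.sub_apply, Matrix.smul_apply]

lemma outer_mul_outer {n : ℕ} (v : Fin n → HQ) (s : ℝ) (hv : star v ⬝ᵥ v = (s : HQ)) :
    outer v * outer v = s • outer v := by
  have hv' : ∑ k, star (v k) * v k = (s : HQ) := by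
    simpa [dotProduct] using hv
  refine Matrix.ext fun i j => ?_
  simp only [outer, Matrix.mul_apply, Matrix.smul_apply, Matrix.of_apply]
  calc ∑ k, v i * star (v k) * (v k * star (v j))
      = ∑ k, v i * (star (v k) * v k * star (v j)) := by
        refine Finset.sum_congr rfl fun k _ => ?_
        rw [mul_assoc, ← mul_assoc (star (v k))]
    _ = v i * ((∑ k, star (v k) * v k) * star (v j)) := by
        rw [← Finset.mul_sum, ← Finset.sum_mul]
    _ = s • (v i * star (v j)) := by
        rw [hv', Quaternion.coe_mul_eq_smul, mul_smul_comm]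

lemma hh_mul_self {n : ℕ} {s : ℝ} (hs : s ≠ 0) {v : Fin n → HQ}
    (hv : star v ⬝ᵥ v = (s : HQ)) : hh s v * hh s v = 1 := by
  have h2 : outer v * outer v = s • outer v := outer_mul_outer v s hv
  have hc : (2 / s) * ((2 / s) * s) = 2 / s + 2 / s := by field_simp; ring
  simp only [hh, sub_mul, mul_sub, one_mul, mul_one, Matrix.smul_mul, Matrix.mul_smul,
    h2, smul_smul]
  rw [hc, add_smul]
  abel

lemma hh_mulVec {n : ℕ} (s : ℝ) (v u : Fin n → HQ) :
    hh s v *ᵥ u = u - (2 / s) • fun i => v i * (star v ⬝ᵥ u) := by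
  rw [hh, Matrix.sub_mulVec, Matrix.one_mulVec, Matrix.smul_mulVec]
  congr 1
  funext i
  simp [outer, Matrix.mulVec, dotProduct, Finset.mul_sum, mul_assoc]

end SpAux

namespace SpAux

lemma reduce {n : ℕ} (hn : 1 ≤ n) (u : Fin n → HQ) (hu : ∑ i, ‖u i‖ ^ 2 = 1) :
    ∃ A : Matrix (Fin n) (Fin n) HQ, A * Aᴴ = 1 ∧ Aᴴ * A = 1 ∧
      A *ᵥ u = Pi.single (⟨0, hn⟩ : Fin n) 1 := by
  classical
  set i0 : Fin n := ⟨0, hn⟩ with hi0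
  set r : ℝ := ‖u i0‖ with hr
  have hr0 : 0 ≤ r := norm_nonneg _
  obtain ⟨q, hq1, hq2, hstarq⟩ :
      ∃ q : HQ, star q * q = 1 ∧ q * star q = 1 ∧ star q * u i0 = (r : HQ) := by
    by_cases h : u i0 = 0
    · exact ⟨1, by simp, by simp, by simp [h, hr]⟩
    · have hrne : r ≠ 0 := by simpa [hr] using norm_ne_zero_iff.mpr h
      refine ⟨(r⁻¹ : ℝ) • u i0, ?_, ?_, ?_⟩
      · rw [Quaternion.star_smul, smul_mul_smul_comm, Quaternion.star_mul_self,
          Quaternion.normSq_eq_norm_mul_self, ← hr, Quaternion.smul_coe]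
        have : r⁻¹ * r⁻¹ * (r * r) = 1 := by field_simp
        rw [this, Quaternion.coe_one]
      · rw [Quaternion.star_smul, smul_mul_smul_comm, Quaternion.self_mul_star,
          Quaternion.normSq_eq_norm_mul_self, ← hr, Quaternion.smul_coe]
        have : r⁻¹ * r⁻¹ * (r * r) = 1 := by field_simp
        rw [this, Quaternion.coe_one]
      · rw [Quaternion.star_smul, smul_mul_assoc, Quaternion.star_mul_self,
          Quaternion.normSq_eq_norm_mul_self, ← hr, Quaternion.smul_coe]
        have : r⁻¹ * (r * r) = r := by field_simp
        rw [this]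
  set y : Fin n → HQ := Pi.single i0 q with hy
  have hyu : star y ⬝ᵥ u = (r : HQ) := by
    rw [← hstarq, hy]
    simp [dotProduct, Pi.single_apply, apply_ite, ite_mul]
  have huy : star u ⬝ᵥ y = (r : HQ) := by
    have h1 := congrArg star hstarq
    rw [StarMul.star_mul, star_star, Quaternion.star_coe] at h1
    rw [← h1, hy]
    simp [dotProduct, Pi.single_apply, mul_ite]
  have hyy : star y ⬝ᵥ y = (1 : HQ) := by
    rw [← hq1, hy]
    simp [dotProduct, Pi.single_apply, apply_ite, ite_mul, mul_ite]
  have huu : star u ⬝ᵥ u = (1 : HQ) := by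
    rw [dot_eq, hu, Quaternion.coe_one]
  set v : Fin n → HQ := u + y with hv
  set s : ℝ := 2 + 2 * r with hs
  have hs0 : s ≠ 0 := by positivity
  have hvv : star v ⬝ᵥ v = (s : HQ) := by
    rw [hv, star_add, add_dotProduct, dotProduct_add,
      dotProduct_add, huu, huy, hyu, hyy, hs]
    have h2 : (2 : ℝ) + 2 * r = 1 + r + (r + 1) := by ring
    rw [h2, Quaternion.coe_add, Quaternion.coe_add, Quaternion.coe_add,
      Quaternion.coe_one]
  have hvu : star v ⬝ᵥ u = ((1 + r : ℝ) : HQ) := by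
    rw [hv, star_add, add_dotProduct, huu, hyu, Quaternion.coe_add,
      Quaternion.coe_one]
  have hHu : hh s v *ᵥ u = -y := by
    rw [hh_mulVec, hvu]
    funext i
    have hcoef : (2 / s) * (1 + r) = 1 := by
      rw [hs]; field_simp
    simp only [Pi.sub_apply, Pi.smul_apply, Pi.neg_apply]
    rw [Quaternion.mul_coe_eq_smul, smul_smul, hcoef, one_smul, hv]
    simp
  set d : Fin n → HQ := fun i => if i = i0 then -(star q) else 1 with hd
  set D : Matrix (Fin n) (Fin n) HQ := Matrix.diagonal d with hD
  have hDH : Dᴴ = Matrix.diagonal fun i => star (d i) := by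
    rw [hD, Matrix.diagonal_conjTranspose]
    rfl
  have hD1 : D * Dᴴ = 1 := by
    rw [hDH, hD, Matrix.diagonal_mul_diagonal]
    refine Matrix.ext fun i j => ?_
    rcases eq_or_ne i i0 with h | h <;>
      simp [Matrix.diagonal_apply, hd, h, hq1, Matrix.one_apply, Pi.single_apply]
  have hD2 : Dᴴ * D = 1 := by
    rw [hDH, hD, Matrix.diagonal_mul_diagonal]
    refine Matrix.ext fun i j => ?_
    rcases eq_or_ne i i0 with h | h <;>
      simp [Matrix.diagonal_apply, hd, h, hq2, Matrix.one_apply, Pi.single_apply]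
  have hDy : D *ᵥ (-y) = Pi.single i0 1 := by
    funext i
    rw [hD]
    rcases eq_or_ne i i0 with h | h
    · subst h
      simp [Matrix.mulVec_diagonal, hd, hy, Pi.single_apply, hq1]
    · simp [Matrix.mulVec_diagonal, hd, if_neg h, hy, Pi.single_apply,
        (Ne.symm h), h]
  refine ⟨D * hh s v, ?_, ?_, ?_⟩
  · rw [Matrix.conjTranspose_mul, hh_conjTranspose, Matrix.mul_assoc,
      ← Matrix.mul_assoc (hh s v), hh_mul_self hs0 hvv, Matrix.one_mul, hD1]
  · rw [Matrix.conjTranspose_mul, hh_conjTranspose, Matrix.mul_assoc,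
      ← Matrix.mul_assoc Dᴴ, hD2, Matrix.one_mul, hh_mul_self hs0 hvv]
  · rw [← Matrix.mulVec_mulVec, hHu, hDy]

end SpAux

/-- For `n ≥ 1`, matrix–vector multiplication by elements of `Sp(n)` (the quaternionic
unitary group, i.e. `A * Aᴴ = 1`) preserves the unit sphere
`S^{4n−1} = {u : Fin n → ℍ | ∑ i, ‖u i‖² = 1} ⊂ ℍⁿ`, and the resulting action is
transitive: for any `u, w ∈ S^{4n−1}` there exists `A ∈ Sp(n)` with `A ·ᵥ u = w`. -/
theorem sp_preserves_sphere_and_transitive (n : ℕ) (hn : 1 ≤ n) :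
    (∀ A : Matrix (Fin n) (Fin n) HQ, A * Aᴴ = 1 →
      ∀ u : Fin n → HQ, ∑ i, ‖u i‖ ^ 2 = 1 → ∑ i, ‖A.mulVec u i‖ ^ 2 = 1) ∧
    (∀ u w : Fin n → HQ, ∑ i, ‖u i‖ ^ 2 = 1 → ∑ i, ‖w i‖ ^ 2 = 1 →
      ∃ A : Matrix (Fin n) (Fin n) HQ, A * Aᴴ = 1 ∧ A.mulVec u = w) := by
  constructor
  · intro A hA u hu
    rw [SpAux.isometry (SpAux.mul_one_comm hA) u, hu]
  · intro u w hu hw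
    obtain ⟨P, hP1, hP2, hPu⟩ := SpAux.reduce hn u hu
    obtain ⟨Q, hQ1, hQ2, hQw⟩ := SpAux.reduce hn w hw
    refine ⟨Qᴴ * P, ?_, ?_⟩
    · rw [Matrix.conjTranspose_mul, Matrix.conjTranspose_conjTranspose,
        Matrix.mul_assoc, ← Matrix.mul_assoc P, hP1, Matrix.one_mul, hQ2]
    · rw [← Matrix.mulVec_mulVec, hPu, ← hQw, Matrix.mulVec_mulVec, hQ2,
        Matrix.one_mulVec]
end

section
/- For n ≥ 1, let e₀ ∈ ℍⁿ be the first standard basis vector. A matrix A ∈ Sp(n) satisfies A·e₀ = e₀ if and only if A is the block-diagonal matrix diag(1, B) for some B ∈ Sp(n−1) (that is, A₀₀ = 1, the remaining entries of the first row and first column vanish, and the lower-right (n−1)×(n−1) block B lies in Sp(n−1)). In particular the stabilizer of e₀ in Sp(n) is a subgroup isomorphic to Sp(n−1). -/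
open Matrix

/-- `Sp(n)`, the quaternionic unitary group (matrices `A` over `ℍ` with `A * Aᴴ = 1`),
as a submonoid of the `n × n` quaternionic matrices. -/
noncomputable def SpM (n : ℕ) : Submonoid (Matrix (Fin n) (Fin n) HQ) where
  carrier := {A | A * Aᴴ = 1}
  one_mem' := by simp
  mul_mem' := by
    intro a b ha hb
    simp only [Set.mem_setOf_eq] at ha hb ⊢
    rw [Matrix.conjTranspose_mul, mul_assoc, ← mul_assoc b, hb, one_mul, ha]

/-- The stabilizer of the first standard basis vector `e₀ = Pi.single 0 1` in `Sp(n+1)`,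
as a submonoid of the `(n+1) × (n+1)` quaternionic matrices. -/
noncomputable def StabM (n : ℕ) : Submonoid (Matrix (Fin (n + 1)) (Fin (n + 1)) HQ) where
  carrier := {A | A * Aᴴ = 1 ∧ A.mulVec (Pi.single 0 1) = Pi.single 0 1}
  one_mem' := ⟨by simp, Matrix.one_mulVec _⟩
  mul_mem' := by
    intro a b ha hb
    refine ⟨?_, ?_⟩
    · rw [Matrix.conjTranspose_mul, mul_assoc, ← mul_assoc b, hb.1, one_mul, ha.1]
    · rw [← Matrix.mulVec_mulVec, hb.2, ha.2]

namespace SpAux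

variable {n : ℕ}

/-- `diag(1, B)`. -/
noncomputable def lift (B : Matrix (Fin n) (Fin n) HQ) : Matrix (Fin (n+1)) (Fin (n+1)) HQ :=
  Matrix.of fun i j =>
    Fin.cases (Fin.cases (1 : HQ) (fun _ => 0) j) (fun p => Fin.cases 0 (fun q => B p q) j) i

@[simp] lemma lift_zero_zero (B : Matrix (Fin n) (Fin n) HQ) : lift B 0 0 = 1 := rfl
@[simp] lemma lift_zero_succ (B : Matrix (Fin n) (Fin n) HQ) (q : Fin n) :
    lift B 0 q.succ = 0 := by simp [lift]
@[simp] lemma lift_succ_zero (B : Matrix (Fin n) (Fin n) HQ) (p : Fin n) :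
    lift B p.succ 0 = 0 := by simp [lift]
@[simp] lemma lift_succ_succ (B : Matrix (Fin n) (Fin n) HQ) (p q : Fin n) :
    lift B p.succ q.succ = B p q := by simp [lift]

/-- Lower-right `n × n` block. -/
noncomputable def res (A : Matrix (Fin (n+1)) (Fin (n+1)) HQ) : Matrix (Fin n) (Fin n) HQ :=
  Matrix.of fun p q => A p.succ q.succ

@[simp] lemma res_apply (A : Matrix (Fin (n+1)) (Fin (n+1)) HQ) (p q : Fin n) :
    res A p q = A p.succ q.succ := rfl

lemma lift_conjTranspose (B : Matrix (Fin n) (Fin n) HQ) : (lift B)ᴴ = lift Bᴴ := by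
  refine Matrix.ext fun i j => ?_
  induction i using Fin.cases <;> induction j using Fin.cases <;>
    simp [Matrix.conjTranspose_apply]

lemma lift_mul (B C : Matrix (Fin n) (Fin n) HQ) : lift B * lift C = lift (B * C) := by
  refine Matrix.ext fun i j => ?_
  rw [Matrix.mul_apply]
  induction i using Fin.cases <;> induction j using Fin.cases <;>
    simp [Fin.sum_univ_succ, Matrix.mul_apply]

lemma lift_one : lift (1 : Matrix (Fin n) (Fin n) HQ) = 1 := by
  refine Matrix.ext fun i j => ?_
  induction i using Fin.cases <;> induction j using Fin.cases <;>
    simp [Matrix.one_apply, Fin.succ_ne_zero, (Fin.succ_ne_zero _).symm, Fin.succ_inj]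

lemma lift_mulVec (B : Matrix (Fin n) (Fin n) HQ) :
    (lift B).mulVec (Pi.single 0 1) = Pi.single 0 1 := by
  funext i
  rw [Matrix.mulVec_single]
  induction i using Fin.cases with
  | zero => simp
  | succ p => simp [Pi.single_eq_of_ne (Fin.succ_ne_zero p)]

lemma col_eq (A : Matrix (Fin (n+1)) (Fin (n+1)) HQ)
    (h : A.mulVec (Pi.single 0 1) = Pi.single 0 1) (i : Fin (n+1)) :
    A i 0 = (Pi.single 0 1 : Fin (n+1) → HQ) i := by
  have := congrFun h i
  rw [Matrix.mulVec_single] at this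
  simpa using this

lemma col_zero (A : Matrix (Fin (n+1)) (Fin (n+1)) HQ)
    (h : A.mulVec (Pi.single 0 1) = Pi.single 0 1) (p : Fin n) :
    A p.succ 0 = 0 := by
  simpa [Pi.single_eq_of_ne (Fin.succ_ne_zero p)] using col_eq A h p.succ

lemma diag_one (A : Matrix (Fin (n+1)) (Fin (n+1)) HQ)
    (h : A.mulVec (Pi.single 0 1) = Pi.single 0 1) : A 0 0 = 1 := by
  simpa using col_eq A h 0

lemma row_eq (A : Matrix (Fin (n+1)) (Fin (n+1)) HQ) (hA : A * Aᴴ = 1)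
    (h : A.mulVec (Pi.single 0 1) = Pi.single 0 1)
    (j : Fin (n+1)) (hj : j ≠ 0) : A 0 j = 0 := by
  have h00 : A 0 0 = 1 := diag_one A h
  have h1 : ∑ k, A 0 k * star (A 0 k) = 1 := by
    have := congrFun (congrFun hA 0) 0
    simpa [Matrix.mul_apply, Matrix.one_apply, Matrix.conjTranspose_apply] using this
  rw [← Finset.add_sum_erase _ _ (Finset.mem_univ 0), h00, one_mul, star_one] at h1
  have hs : ∑ k ∈ Finset.univ.erase 0, A 0 k * star (A 0 k) = 0 := add_eq_left.mp h1
  simp only [Quaternion.self_mul_star] at hs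
  have h2 := congrArg (QuaternionAlgebra.reₗ (-1 : ℝ) (0 : ℝ) (-1 : ℝ)) hs
  erw [map_sum, map_zero] at h2
  simp only [QuaternionAlgebra.reₗ, Quaternion.re_coe] at h2
  have := (Finset.sum_eq_zero_iff_of_nonneg
    (fun i _ => Quaternion.normSq_nonneg)).mp h2 j (Finset.mem_erase.mpr ⟨hj, Finset.mem_univ j⟩)
  exact Quaternion.normSq_eq_zero.mp this

lemma res_sp (A : Matrix (Fin (n+1)) (Fin (n+1)) HQ) (hA : A * Aᴴ = 1)
    (h : A.mulVec (Pi.single 0 1) = Pi.single 0 1) : res A * (res A)ᴴ = 1 := by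
  refine Matrix.ext fun p q => ?_
  have h1 := congrFun (congrFun hA p.succ) q.succ
  rw [Matrix.mul_apply, Fin.sum_univ_succ] at h1
  simp only [Matrix.conjTranspose_apply, col_zero A h q, star_zero, mul_zero, zero_add] at h1
  rw [Matrix.mul_apply]
  simp only [Matrix.conjTranspose_apply, res_apply]
  rw [h1]
  simp [Matrix.one_apply, Fin.succ_inj]

lemma res_mul (A A' : Matrix (Fin (n+1)) (Fin (n+1)) HQ)
    (h : A.mulVec (Pi.single 0 1) = Pi.single 0 1) :
    res (A * A') = res A * res A' := by
  refine Matrix.ext fun p q => ?_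
  rw [res_apply, Matrix.mul_apply, Fin.sum_univ_succ, col_zero A h p, zero_mul, zero_add,
    Matrix.mul_apply]
  rfl

lemma lift_res (A : Matrix (Fin (n+1)) (Fin (n+1)) HQ) (hA : A * Aᴴ = 1)
    (h : A.mulVec (Pi.single 0 1) = Pi.single 0 1) : lift (res A) = A := by
  refine Matrix.ext fun i j => ?_
  induction i using Fin.cases with
  | zero =>
    induction j using Fin.cases with
    | zero => rw [lift_zero_zero, diag_one A h]
    | succ q => rw [lift_zero_succ, row_eq A hA h q.succ (Fin.succ_ne_zero q)]
  | succ p =>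
    induction j using Fin.cases with
    | zero => rw [lift_succ_zero, col_zero A h p]
    | succ q => rw [lift_succ_succ, res_apply]

/-- The stabilizer is isomorphic to `Sp(n)`. -/
noncomputable def iso (n : ℕ) : StabM n ≃* SpM n where
  toFun A := ⟨res A.1, res_sp A.1 A.2.1 A.2.2⟩
  invFun B := ⟨lift B.1,
    ⟨by rw [lift_conjTranspose, lift_mul, B.2, lift_one], lift_mulVec B.1⟩⟩
  left_inv A := Subtype.ext (lift_res A.1 A.2.1 A.2.2)
  right_inv B := Subtype.ext (Matrix.ext fun p q => by simp)
  map_mul' A A' := Subtype.ext (res_mul A.1 A'.1 A.2.2)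

end SpAux

/-- For `n ≥ 1` (here the size is written as `n + 1`), a matrix `A ∈ Sp(n+1)` fixes the
first standard basis vector `e₀` if and only if `A = diag(1, B)` for some `B ∈ Sp(n)`:
`A₀₀ = 1`, the remaining entries of the first row and column vanish, and the lower-right
`n × n` block lies in `Sp(n)`.  In particular the stabilizer of `e₀` in `Sp(n+1)` is
isomorphic to `Sp(n)`. -/
theorem sp_stabilizer_basis_vector (n : ℕ) (A : Matrix (Fin (n + 1)) (Fin (n + 1)) HQ)
    (hA : A * Aᴴ = 1) :
    (A.mulVec (Pi.single 0 1) = Pi.single 0 1 ↔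
      (A 0 0 = 1 ∧ (∀ j : Fin (n + 1), j ≠ 0 → A 0 j = 0 ∧ A j 0 = 0) ∧
        ∃ B : Matrix (Fin n) (Fin n) HQ, B * Bᴴ = 1 ∧
          ∀ p q : Fin n, A p.succ q.succ = B p q)) ∧
    Nonempty (StabM n ≃* SpM n) := by
  refine ⟨⟨fun h => ?_, fun h => ?_⟩, ⟨SpAux.iso n⟩⟩
  · refine ⟨SpAux.diag_one A h,
      fun j hj => ⟨SpAux.row_eq A hA h j hj, by
        simpa [Pi.single_eq_of_ne hj] using SpAux.col_eq A h j⟩,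
      SpAux.res A, SpAux.res_sp A hA h, fun p q => rfl⟩
  · obtain ⟨h00, hrc, -⟩ := h
    funext i
    rw [Matrix.mulVec_single]
    by_cases hi : i = 0
    · subst hi; simpa using h00
    · simp [(hrc i hi).2, Pi.single_eq_of_ne hi]
end

section
/- Quaternionic projective space ℍPⁿ (the quotient of (Fin (n+1) → ℍ) \ {0} by componentwise right multiplication by nonzero quaternions, with the quotient topology) is a compact Hausdorff topological space. -/
open Matrix

/-- The nonzero vectors of `Fin (n+1) → ℍ`, with the subspace topology. -/
def PV (n : ℕ) : Type := {Z : Fin (n + 1) → HQ // Z ≠ 0}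

instance (n : ℕ) : TopologicalSpace (PV n) :=
  inferInstanceAs (TopologicalSpace {Z : Fin (n + 1) → HQ // Z ≠ 0})

/-- The relation `Z ∼ Z·q` of componentwise right scalar multiplication by a nonzero
quaternion `q`. -/
def projRel (n : ℕ) (Z W : PV n) : Prop :=
  ∃ q : HQ, q ≠ 0 ∧ W.val = fun i => Z.val i * q

/-- Quaternionic projective space `ℍPⁿ`: the quotient of the nonzero vectors of
`Fin (n+1) → ℍ` by componentwise right multiplication by nonzero quaternions, with the
quotient topology. -/
def HP (n : ℕ) : Type := Quot (projRel n)

instance (n : ℕ) : TopologicalSpace (HP n) :=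
  inferInstanceAs (TopologicalSpace (Quot (projRel n)))

/-- The class `[Z₀ : … : Zₙ] ∈ ℍPⁿ` of a nonzero vector `Z`. -/
def HPmk {n : ℕ} (Z : Fin (n + 1) → HQ) (h : Z ≠ 0) : HP n := Quot.mk _ ⟨Z, h⟩

/-! ### Auxiliary lemmas -/


lemma projRel_equiv (n : ℕ) : Equivalence (projRel n) := by
  constructor
  · intro Z; exact ⟨1, one_ne_zero, by funext i; simp⟩
  · rintro Z W ⟨q, hq, hW⟩
    refine ⟨q⁻¹, inv_ne_zero hq, ?_⟩
    funext i
    simp [hW, mul_assoc, mul_inv_cancel₀ hq]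
  · rintro Z W V ⟨q, hq, hW⟩ ⟨r, hr, hV⟩
    refine ⟨q * r, mul_ne_zero hq hr, ?_⟩
    funext i
    simp [hV, hW, mul_assoc]

lemma hp_mk_eq_iff {n : ℕ} {Z W : PV n} :
    Quot.mk (projRel n) Z = Quot.mk (projRel n) W ↔ projRel n Z W := by
  rw [Quot.eq, (projRel_equiv n).eqvGen_iff]

noncomputable def mulRight {n : ℕ} (c : {q : HQ // q ≠ 0}) (Z : PV n) : PV n :=
  ⟨fun i => Z.val i * c.val, fun h0 => Z.property (by
    funext i
    have := congrFun h0 i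
    simpa [mul_eq_zero, c.property] using this)⟩

lemma continuous_mulRight {n : ℕ} (c : {q : HQ // q ≠ 0}) :
    Continuous (mulRight (n := n) c) := by
  apply Continuous.subtype_mk
  exact continuous_pi fun i => ((continuous_apply i).comp continuous_subtype_val).mul
    continuous_const

lemma mulRight_comp {n : ℕ} (c : {q : HQ // q ≠ 0}) (Z : PV n) :
    mulRight ⟨c.val⁻¹, inv_ne_zero c.property⟩ (mulRight c Z) = Z := by
  apply Subtype.ext
  funext i
  simp [mulRight, mul_assoc, mul_inv_cancel₀ c.property]

lemma mulRight_comp' {n : ℕ} (c : {q : HQ // q ≠ 0}) (Z : PV n) :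
    mulRight c (mulRight ⟨c.val⁻¹, inv_ne_zero c.property⟩ Z) = Z := by
  apply Subtype.ext
  funext i
  simp [mulRight, mul_assoc, inv_mul_cancel₀ c.property]

lemma isOpenMap_mulRight {n : ℕ} (c : {q : HQ // q ≠ 0}) {U : Set (PV n)} (hU : IsOpen U) :
    IsOpen (mulRight c '' U) := by
  have : mulRight c '' U = mulRight (n := n) ⟨c.val⁻¹, inv_ne_zero c.property⟩ ⁻¹' U := by
    ext Z
    constructor
    · rintro ⟨W, hWU, rfl⟩
      simpa [Set.mem_preimage, mulRight_comp] using hWU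
    · intro hZ
      exact ⟨_, hZ, mulRight_comp' c Z⟩
  rw [this]
  exact hU.preimage (continuous_mulRight _)

lemma isOpenMap_quotmk (n : ℕ) : IsOpenMap (Quot.mk (projRel n)) := by
  intro U hU
  rw [isOpen_coinduced]
  have : Quot.mk (projRel n) ⁻¹' (Quot.mk (projRel n) '' U) =
      ⋃ c : {q : HQ // q ≠ 0}, mulRight c '' U := by
    ext Z
    simp only [Set.mem_preimage, Set.mem_image, Set.mem_iUnion]
    constructor
    · rintro ⟨W, hWU, hWZ⟩
      obtain ⟨q, hq, hval⟩ := hp_mk_eq_iff.mp hWZ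
      exact ⟨⟨q, hq⟩, W, hWU, Subtype.ext hval.symm⟩
    · rintro ⟨c, W, hWU, rfl⟩
      exact ⟨W, hWU, Quot.sound ⟨c.val, c.property, rfl⟩⟩
  rw [this]
  exact isOpen_iUnion fun c => isOpenMap_mulRight c hU

lemma isClosed_rel (n : ℕ) :
    IsClosed {p : PV n × PV n | projRel n p.1 p.2} := by
  have heq : {p : PV n × PV n | projRel n p.1 p.2} =
      ⋂ i, ⋂ j, {p : PV n × PV n |
        star (p.1.val j) * p.1.val j * p.2.val i =
          p.1.val i * (star (p.1.val j) * p.2.val j)} := by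
    ext ⟨Z, W⟩
    simp only [Set.mem_setOf_eq, Set.mem_iInter]
    constructor
    · rintro ⟨q, hq, hW⟩ i j
      have hWi : W.val i = Z.val i * q := congrFun hW i
      have hWj : W.val j = Z.val j * q := congrFun hW j
      rw [hWi, hWj, ← mul_assoc (star (Z.val j)) (Z.val j) q,
        ← mul_assoc (Z.val i) (star (Z.val j) * Z.val j) q,
        Quaternion.star_mul_self, ← mul_assoc, Quaternion.coe_commutes]
    · intro h
      obtain ⟨j, hj⟩ : ∃ j, Z.val j ≠ 0 := by
        by_contra hcon
        push_neg at hcon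
        exact Z.property (funext hcon)
      set q : HQ := (Z.val j)⁻¹ * W.val j with hqdef
      have hns : Quaternion.normSq (Z.val j) ≠ 0 := Quaternion.normSq_ne_zero.mpr hj
      have hWq : W.val = fun i => Z.val i * q := by
        funext i
        have hi := h i j
        have : Z.val i * q =
            (Quaternion.normSq (Z.val j))⁻¹ • (Z.val i * (star (Z.val j) * W.val j)) := by
          rw [hqdef, Quaternion.inv_def, smul_mul_assoc, mul_smul_comm]
        rw [this, ← hi, Quaternion.star_mul_self, Quaternion.coe_mul_eq_smul, smul_smul,
          inv_mul_cancel₀ hns, one_smul]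
      refine ⟨q, ?_, hWq⟩
      intro h0
      apply W.property
      rw [hWq]
      funext i
      simp [h0]
  rw [heq]
  refine isClosed_iInter fun i => isClosed_iInter fun j => isClosed_eq ?_ ?_
  · have hj : Continuous fun p : PV n × PV n => p.1.val j :=
      (continuous_apply j).comp (continuous_subtype_val.comp continuous_fst)
    have hi : Continuous fun p : PV n × PV n => p.2.val i :=
      (continuous_apply i).comp (continuous_subtype_val.comp continuous_snd)
    exact ((hj.star.mul hj).mul hi)
  · have hj : Continuous fun p : PV n × PV n => p.1.val j :=
      (continuous_apply j).comp (continuous_subtype_val.comp continuous_fst)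
    have hi : Continuous fun p : PV n × PV n => p.1.val i :=
      (continuous_apply i).comp (continuous_subtype_val.comp continuous_fst)
    have hwj : Continuous fun p : PV n × PV n => p.2.val j :=
      (continuous_apply j).comp (continuous_subtype_val.comp continuous_snd)
    exact hi.mul (hj.star.mul hwj)

lemma hp_compact (n : ℕ) : CompactSpace (HP n) := by
  rw [← isCompact_univ_iff]
  set T : Set (PV n) := {Z : PV n | ‖Z.val‖ = 1} with hT
  have hTc : IsCompact T := by
    have hemb : Topology.IsEmbedding (Subtype.val : PV n → (Fin (n + 1) → HQ)) :=
      Topology.IsEmbedding.subtypeVal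
    apply hemb.isCompact_iff.mpr
    have : Subtype.val '' T = Metric.sphere (0 : Fin (n + 1) → HQ) 1 := by
      ext Z
      simp only [Set.mem_image, Metric.mem_sphere, dist_zero_right]
      constructor
      · rintro ⟨W, hW, rfl⟩; exact hW
      · intro hZ
        have hZ0 : Z ≠ 0 := by
          intro h0; rw [h0] at hZ; simp at hZ
        exact ⟨⟨Z, hZ0⟩, hZ, rfl⟩
    rw [this]
    exact isCompact_sphere 0 1
  have hsurj : Quot.mk (projRel n) '' T = Set.univ := by
    refine Set.eq_univ_of_forall fun x => ?_
    obtain ⟨⟨Z, hZ⟩, rfl⟩ := Quot.exists_rep x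
    have hZn : ‖Z‖ ≠ 0 := norm_ne_zero_iff.mpr hZ
    set r : ℝ := ‖Z‖⁻¹ with hr
    have hrne : (r : HQ) ≠ 0 := by
      rw [← Quaternion.coe_zero, Ne, Quaternion.coe_inj]
      exact inv_ne_zero hZn
    set W : Fin (n + 1) → HQ := fun i => Z i * (r : HQ) with hWdef
    have hWr : W = r • Z := by
      funext i
      rw [hWdef]
      simp [Quaternion.mul_coe_eq_smul]
    have hWnorm : ‖W‖ = 1 := by
      rw [hWr, norm_smul, norm_inv, norm_norm, inv_mul_cancel₀ hZn]
    have hW0 : W ≠ 0 := fun h0 => by rw [h0] at hWnorm; simp at hWnorm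
    refine ⟨⟨W, hW0⟩, hWnorm, ?_⟩
    exact (Quot.sound ⟨(r : HQ), hrne, rfl⟩).symm
  rw [show (Set.univ : Set (HP n)) = Quot.mk (projRel n) '' T from hsurj.symm]
  exact hTc.image (continuous_quot_mk)

lemma hp_t2 (n : ℕ) : T2Space (HP n) := by
  refine ⟨fun a b hab => ?_⟩
  obtain ⟨Z, rfl⟩ := Quot.exists_rep a
  obtain ⟨W, rfl⟩ := Quot.exists_rep b
  have hZW : (Z, W) ∈ {p : PV n × PV n | projRel n p.1 p.2}ᶜ := by
    intro h
    exact hab (Quot.sound h)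
  obtain ⟨U, V, hU, hV, hZU, hWV, hsub⟩ :=
    isOpen_prod_iff.mp (isClosed_rel n).isOpen_compl Z W hZW
  refine ⟨Quot.mk _ '' U, Quot.mk _ '' V, isOpenMap_quotmk n U hU, isOpenMap_quotmk n V hV,
    ⟨Z, hZU, rfl⟩, ⟨W, hWV, rfl⟩, ?_⟩
  rw [Set.disjoint_left]
  rintro x ⟨u, hu, rfl⟩ ⟨v, hv, hvq⟩
  have : projRel n u v := hp_mk_eq_iff.mp hvq.symm
  exact hsub (Set.mk_mem_prod hu hv) this

/-- Quaternionic projective space `ℍPⁿ` is a compact Hausdorff topological space. -/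
theorem hp_compactSpace_t2Space (n : ℕ) : CompactSpace (HP n) ∧ T2Space (HP n) :=
  ⟨hp_compact n, hp_t2 n⟩
end

section
/- For n ≥ 1, define F : S^{4n−1} × [0,1] → ℍPⁿ by F(u, 0) = [1 : 0 : … : 0], F(u, s) = [√((1−s)/s) : u₁ : … : uₙ] for 0 < s < 1, and F(u, 1) = [0 : u₁ : … : uₙ]. Then F is continuous and surjective. -/
open Matrix

/-- The unit sphere `S^{4n−1} = {u : Fin n → ℍ | ∑ i, ‖u i‖² = 1} ⊂ ℍⁿ`. -/
def Sph (n : ℕ) : Type := {u : Fin n → HQ // ∑ i, ‖u i‖ ^ 2 = 1}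

instance (n : ℕ) : TopologicalSpace (Sph n) :=
  inferInstanceAs (TopologicalSpace {u : Fin n → HQ // ∑ i, ‖u i‖ ^ 2 = 1})

lemma cons_one_ne_zero {n : ℕ} (w : Fin n → HQ) : (Fin.cons 1 w : Fin (n + 1) → HQ) ≠ 0 := by
  intro h
  have := congrFun h 0
  simp at this

lemma cons_coe_ne_zero {n : ℕ} (u : Fin n → HQ) {c : ℝ} (hc : c ≠ 0) :
    (Fin.cons (c : HQ) u : Fin (n + 1) → HQ) ≠ 0 := by
  intro h
  have := congrFun h 0
  simp only [Fin.cons_zero, Pi.zero_apply] at this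
  exact hc (Quaternion.coe_injective (by simpa using this))

lemma cons_zero_ne_zero {n : ℕ} (u : Fin n → HQ) (hu : ∑ i, ‖u i‖ ^ 2 = 1) :
    (Fin.cons 0 u : Fin (n + 1) → HQ) ≠ 0 := by
  intro h
  have hz : u = 0 := funext fun i => by simpa using congrFun h i.succ
  rw [hz] at hu
  simp at hu

/-- The map `F : S^{4n−1} × [0,1] → ℍPⁿ` given by `F(u, 0) = [1 : 0 : … : 0]`,
`F(u, s) = [√((1−s)/s) : u₁ : … : uₙ]` for `0 < s < 1`, and `F(u, 1) = [0 : u₁ : … : uₙ]`. -/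
noncomputable def Fmap (n : ℕ) (u : Sph n) (s : Set.Icc (0 : ℝ) 1) : HP n :=
  if h0 : (s : ℝ) = 0 then HPmk (Fin.cons 1 0) (cons_one_ne_zero 0)
  else if h1 : (s : ℝ) = 1 then HPmk (Fin.cons 0 u.val) (cons_zero_ne_zero u.val u.prop)
  else HPmk (Fin.cons ((Real.sqrt ((1 - s) / s) : ℝ) : HQ) u.val)
    (cons_coe_ne_zero u.val (ne_of_gt (Real.sqrt_pos.mpr
      (div_pos (by have := s.2.2; cases lt_or_eq_of_le this with
                   | inl h => linarith
                   | inr h => exact absurd h h1)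
        (lt_of_le_of_ne s.2.1 (Ne.symm h0))))))


/-- The continuous lift `g(u,s) = (√(1−s), √s·u₁, …, √s·uₙ)` of `Fmap` to nonzero vectors. -/
noncomputable def gvec (n : ℕ) (p : Sph n × Set.Icc (0:ℝ) 1) : Fin (n+1) → HQ :=
  Fin.cons ((Real.sqrt (1 - p.2) : ℝ) : HQ) (fun i => ((Real.sqrt p.2 : ℝ) : HQ) * p.1.val i)

lemma gvec_ne (n : ℕ) (p : Sph n × Set.Icc (0:ℝ) 1) : gvec n p ≠ 0 := by
  intro h
  obtain ⟨⟨u, hu⟩, s, hs0, hs1⟩ := p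
  have h0 := congrFun h 0
  simp only [gvec, Fin.cons_zero, Pi.zero_apply] at h0
  have : Real.sqrt (1 - s) = 0 := Quaternion.coe_injective (by simpa using h0)
  have hs : (s:ℝ) = 1 := by
    have := Real.sqrt_eq_zero (by linarith) |>.mp this
    linarith
  have : u = 0 := by
    funext i
    have := congrFun h i.succ
    simp only [gvec, Fin.cons_succ, Pi.zero_apply] at this
    rw [hs] at this
    simpa using this
  rw [this] at hu; simp at hu

lemma gvec_cont (n : ℕ) : Continuous (gvec n) := by
  apply continuous_pi
  intro i
  refine Fin.cases ?_ ?_ i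
  · simp only [gvec, Fin.cons_zero]
    exact Quaternion.continuous_coe.comp (Real.continuous_sqrt.comp
      (continuous_const.sub (continuous_subtype_val.comp continuous_snd)))
  · intro j
    simp only [gvec, Fin.cons_succ]
    exact (Quaternion.continuous_coe.comp (Real.continuous_sqrt.comp
      (continuous_subtype_val.comp continuous_snd))).mul
      ((continuous_apply j).comp (continuous_subtype_val.comp continuous_fst))

noncomputable def gmap (n : ℕ) (p : Sph n × Set.Icc (0:ℝ) 1) : PV n := ⟨gvec n p, gvec_ne n p⟩

lemma gmap_cont (n : ℕ) : Continuous (gmap n) :=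
  Continuous.subtype_mk (gvec_cont n) _

lemma fmap_eq_gmap (n : ℕ) (p : Sph n × Set.Icc (0:ℝ) 1) :
    Fmap n p.1 p.2 = Quot.mk (projRel n) (gmap n p) := by
  obtain ⟨u, s⟩ := p
  rcases eq_or_ne (s:ℝ) 0 with h0 | h0
  · rw [Fmap, dif_pos h0]
    refine congrArg (Quot.mk _) (Subtype.ext ?_)
    show (Fin.cons 1 0 : Fin (n+1) → HQ) = gvec n (u, s)
    funext i
    refine Fin.cases ?_ (fun j => ?_) i
    · simp [gvec, h0]
    · simp [gvec, h0]
  · rcases eq_or_ne (s:ℝ) 1 with h1 | h1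
    · rw [Fmap, dif_neg h0, dif_pos h1]
      refine congrArg (Quot.mk _) (Subtype.ext ?_)
      show (Fin.cons 0 u.val : Fin (n+1) → HQ) = gvec n (u, s)
      funext i
      refine Fin.cases ?_ (fun j => ?_) i
      · simp [gvec, h1]
      · simp [gvec, h1]
    · have hs0 : 0 < (s:ℝ) := lt_of_le_of_ne s.2.1 (Ne.symm h0)
      have hs1 : (s:ℝ) < 1 := lt_of_le_of_ne s.2.2 h1
      rw [Fmap, dif_neg h0, dif_neg h1]
      apply Quot.sound
      refine ⟨((Real.sqrt s : ℝ) : HQ), ?_, ?_⟩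
      · intro h
        have : Real.sqrt s = 0 := Quaternion.coe_injective (by simpa using h)
        rw [Real.sqrt_eq_zero hs0.le] at this
        exact h0 this
      · funext i
        refine Fin.cases ?_ (fun j => ?_) i
        · show ((Real.sqrt (1 - s) : ℝ) : HQ) = _
          simp only [Fin.cons_zero, ← Quaternion.coe_mul]
          congr 1
          rw [← Real.sqrt_mul (div_nonneg (by linarith) hs0.le),
            div_mul_cancel₀ _ (ne_of_gt hs0)]
        · show ((Real.sqrt s : ℝ) : HQ) * u.val j = _
          simp only [Fin.cons_succ, Quaternion.coe_commutes]

lemma norm_unit_aux {n : ℕ} (v : Fin n → HQ) (hv : v ≠ 0) :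
    ∃ m : ℝ, 0 < m ∧ m ^ 2 = ∑ i, ‖v i‖ ^ 2 ∧
      ∑ i, ‖v i * ((m⁻¹ : ℝ) : HQ)‖ ^ 2 = 1 := by
  have hpos : 0 < ∑ i, ‖v i‖ ^ 2 := by
    obtain ⟨j, hj⟩ := Function.ne_iff.mp hv
    have h1 : (0:ℝ) < ‖v j‖ ^ 2 := pow_pos (norm_pos_iff.mpr hj) 2
    exact lt_of_lt_of_le h1 (Finset.single_le_sum (f := fun i => ‖v i‖ ^ 2)
      (fun i _ => by positivity) (Finset.mem_univ j))
  refine ⟨Real.sqrt (∑ i, ‖v i‖ ^ 2), Real.sqrt_pos.mpr hpos, Real.sq_sqrt hpos.le, ?_⟩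
  set m := Real.sqrt (∑ i, ‖v i‖ ^ 2) with hm
  have hmpos : 0 < m := Real.sqrt_pos.mpr hpos
  simp only [norm_mul, Quaternion.norm_coe, Real.norm_eq_abs,
    abs_of_pos (inv_pos.mpr hmpos), mul_pow, ← Finset.sum_mul]
  rw [← Real.sq_sqrt hpos.le, ← hm]
  field_simp

/-- For `n ≥ 1`, the map `F : S^{4n−1} × [0,1] → ℍPⁿ` is continuous and surjective. -/
theorem fmap_continuous_surjective (n : ℕ) (hn : 1 ≤ n) :
    Continuous (fun p : Sph n × (Set.Icc (0 : ℝ) 1) => Fmap n p.1 p.2) ∧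
    Function.Surjective (fun p : Sph n × (Set.Icc (0 : ℝ) 1) => Fmap n p.1 p.2) := by
  constructor
  · have : (fun p : Sph n × (Set.Icc (0 : ℝ) 1) => Fmap n p.1 p.2)
        = (Quot.mk (projRel n)) ∘ gmap n := funext (fmap_eq_gmap n)
    rw [this]
    exact (continuous_quot_mk).comp (gmap_cont n)
  · intro x
    induction x using Quot.ind with
    | _ Z =>
    obtain ⟨Z, hZ⟩ := Z
    set w : Fin n → HQ := fun i => Z i.succ with hw
    -- a point on the sphere, needed when w = 0
    have hsph : ∑ i, ‖(Pi.single (⟨0, hn⟩ : Fin n) (1:HQ) : Fin n → HQ) i‖ ^ 2 = 1 := by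
      simp [Pi.single_apply, apply_ite (fun x : HQ => ‖x‖ ^ 2)]
    rcases eq_or_ne w 0 with hw0 | hw0
    · -- case s = 0
      have hZ0 : Z 0 ≠ 0 := by
        intro h
        apply hZ
        funext i
        refine Fin.cases ?_ (fun j => ?_) i
        · exact h
        · exact congrFun hw0 j
      refine ⟨⟨⟨(Pi.single (⟨0, hn⟩ : Fin n) (1:HQ) : Fin n → HQ), hsph⟩, ⟨0, by norm_num, by norm_num⟩⟩, ?_⟩
      show Fmap n _ _ = _
      rw [Fmap, dif_pos rfl]
      apply Quot.sound
      refine ⟨Z 0, hZ0, ?_⟩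
      funext i
      refine Fin.cases ?_ (fun j => ?_) i
      · simp
      · simpa using congrFun hw0 j
    · rcases eq_or_ne (Z 0) 0 with hZ0 | hZ0
      · -- case s = 1
        obtain ⟨m, hm, hm2, hsum⟩ := norm_unit_aux w hw0
        refine ⟨⟨⟨fun i => w i * ((m⁻¹ : ℝ) : HQ), hsum⟩, ⟨1, by norm_num, le_refl 1⟩⟩, ?_⟩
        show Fmap n _ _ = _
        rw [Fmap, dif_neg (by norm_num), dif_pos rfl]
        apply Quot.sound
        refine ⟨((m : ℝ) : HQ),
          fun h => hm.ne' (Quaternion.coe_injective (by simpa using h)), ?_⟩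
        funext i
        refine Fin.cases ?_ (fun j => ?_) i
        · simp [hZ0]
        · show Z j.succ = w j * ((m⁻¹ : ℝ) : HQ) * ((m : ℝ) : HQ)
          rw [mul_assoc, ← Quaternion.coe_mul, inv_mul_cancel₀ hm.ne']
          simp [hw]
      · -- generic case
        have hvne : (fun i => w i * (Z 0)⁻¹) ≠ 0 := by
          intro h
          apply hw0
          funext i
          have := congrFun h i
          simp only [Pi.zero_apply] at this ⊢
          have := congrArg (· * Z 0) this
          simpa [mul_assoc, inv_mul_cancel₀ hZ0] using this
        obtain ⟨m, hm, hm2, hsum⟩ := norm_unit_aux _ hvne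
        set s : ℝ := m ^ 2 / (1 + m ^ 2) with hs
        have hden : (0:ℝ) < 1 + m ^ 2 := by positivity
        have hs0 : 0 < s := by positivity
        have hs1 : s < 1 := by
          rw [hs, div_lt_one hden]; linarith
        have hsqrt : Real.sqrt ((1 - s) / s) = m⁻¹ := by
          have h2 : (1 - s) / s = m⁻¹ ^ 2 := by
            rw [hs]
            field_simp
            ring
          rw [h2, Real.sqrt_sq (by positivity)]
        refine ⟨⟨⟨fun i => w i * (Z 0)⁻¹ * ((m⁻¹ : ℝ) : HQ), hsum⟩,
          ⟨s, hs0.le, hs1.le⟩⟩, ?_⟩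
        show Fmap n _ _ = _
        rw [Fmap, dif_neg (by exact hs0.ne'), dif_neg (by exact hs1.ne)]
        apply Quot.sound
        refine ⟨((m : ℝ) : HQ) * Z 0, ?_, ?_⟩
        · exact mul_ne_zero
            (fun h => hm.ne' (Quaternion.coe_injective (by simpa using h))) hZ0
        · funext i
          refine Fin.cases ?_ (fun j => ?_) i
          · show Z 0 = ((Real.sqrt ((1 - s) / s) : ℝ) : HQ) * (((m : ℝ) : HQ) * Z 0)
            rw [hsqrt, ← mul_assoc, ← Quaternion.coe_mul, inv_mul_cancel₀ hm.ne']
            simp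
          · show Z j.succ = w j * (Z 0)⁻¹ * ((m⁻¹ : ℝ) : HQ) * (((m : ℝ) : HQ) * Z 0)
            rw [mul_assoc (w j * (Z 0)⁻¹), ← mul_assoc (((m⁻¹:ℝ)):HQ), ← Quaternion.coe_mul,
              inv_mul_cancel₀ hm.ne']
            simp [mul_assoc, inv_mul_cancel₀ hZ0, hw]
end

section
/- Fix a real number c > 0. For a nonzero quaternion q set λ(q) = c/(c + ‖q‖²) and let w(q) be the quaternion cos(π·λ(q)) + sin(π·λ(q))·i. Then the function q ↦ ‖q‖⁻²·(star q · w(q) · q − ‖q‖²) on ℍ \ {0} tends to −2 as q → 0 (along the punctured neighborhood filter). (This is the limit showing that the entries C_{pq} = (|Z₁|² Σ|Z_l|²)⁻¹ Z_{p+1}[Z̄₁ e^{iπλ} Z₁ − |Z₁|²] Z̄_{q+1} of the moment map extend continuously across Z₁ = 0.) -/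
open Real Filter

/-- The distinguished imaginary unit `i` of the quaternions. -/
noncomputable def quatI : HQ := ⟨0, 1, 0, 0⟩

lemma norm_quatI : ‖quatI‖ = 1 := by
  have h : Quaternion.normSq quatI = 1 := by rw [Quaternion.normSq_def']; simp [quatI]
  rw [Quaternion.normSq_eq_norm_mul_self] at h
  nlinarith [norm_nonneg quatI]

lemma star_mul_self' (q : HQ) : star q * q = ((‖q‖^2 : ℝ) : HQ) := by
  rw [Quaternion.star_mul_self, Quaternion.normSq_eq_norm_mul_self]; ring_nf

lemma key_bound (q : HQ) (hq : q ≠ 0) (r s : ℝ) :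
    ‖(‖q‖ ^ 2)⁻¹ • (star q * (((r : ℝ) : HQ) + ((s : ℝ) : HQ) * quatI) * q -
        ((‖q‖ ^ 2 : ℝ) : HQ)) - (-2)‖ ≤ |r + 1| + |s| := by
  have hn : (0:ℝ) < ‖q‖ ^ 2 := pow_pos (norm_pos_iff.mpr hq) 2
  have h1 : ∀ t : ℝ, ((t : ℝ) : HQ) = t • (1 : HQ) := fun t => by
    rw [← mul_one ((t : ℝ) : HQ), Quaternion.coe_mul_eq_smul]
  have hexp : star q * (((r : ℝ) : HQ) + ((s : ℝ) : HQ) * quatI) * q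
      = r • ((‖q‖^2 : ℝ) : HQ) + s • (star q * quatI * q) := by
    rw [← star_mul_self' q, h1 r, h1 s]
    simp only [mul_add, add_mul, mul_smul_comm, smul_mul_assoc, mul_one, one_mul, mul_assoc]
  rw [hexp]
  have h3 : (‖q‖ ^ 2)⁻¹ • ((‖q‖^2 : ℝ) : HQ) = (1 : HQ) := by
    rw [← Quaternion.coe_smul, smul_eq_mul, inv_mul_cancel₀ hn.ne']
    simp
  have h21 : (2 : HQ) = (2 : ℝ) • (1 : HQ) := by
    rw [← h1 2]; norm_cast
  have h2 : (‖q‖ ^ 2)⁻¹ • (r • ((‖q‖^2 : ℝ) : HQ) + s • (star q * quatI * q) -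
      ((‖q‖ ^ 2 : ℝ) : HQ)) - (-2)
      = (r - 1) • ((‖q‖ ^ 2)⁻¹ • ((‖q‖^2 : ℝ) : HQ))
        + ((s * (‖q‖ ^ 2)⁻¹) • (star q * quatI * q)) + 2 := by
    module
  rw [h2, h3, h21]
  have h4 : (r - 1) • (1:HQ) + (s * (‖q‖ ^ 2)⁻¹) • (star q * quatI * q) + (2:ℝ) • (1:HQ)
      = (r + 1) • (1:HQ) + (s * (‖q‖ ^ 2)⁻¹) • (star q * quatI * q) := by
    module
  rw [h4]
  refine (norm_add_le _ _).trans (le_of_eq ?_)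
  have e1 : ‖(r + 1) • (1:HQ)‖ = |r + 1| := by
    rw [norm_smul, norm_one, mul_one, Real.norm_eq_abs]
  have e2 : ‖(s * (‖q‖^2)⁻¹) • (star q * quatI * q)‖ = |s| := by
    have hy : ‖star q * quatI * q‖ = ‖q‖ ^ 2 := by
      rw [norm_mul, norm_mul, Quaternion.norm_star, norm_quatI]; ring
    rw [norm_smul, hy, Real.norm_eq_abs, abs_mul, abs_of_pos (inv_pos.mpr hn)]
    field_simp
  rw [e1, e2]

/-- Fix a real number `c > 0`.  For a nonzero quaternion `q` set
`λ(q) = c/(c + ‖q‖²)` and let `w(q) = cos(π·λ(q)) + sin(π·λ(q))·i`.  Then the function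
`q ↦ ‖q‖⁻²·(star q · w(q) · q − ‖q‖²)` on `ℍ \ {0}` tends to `−2` as `q → 0` along the
punctured neighborhood filter.  (This is the limit showing that the entries
`C_{pq} = (|Z₁|² Σ|Z_l|²)⁻¹ Z_{p+1}[Z̄₁ e^{iπλ} Z₁ − |Z₁|²] Z̄_{q+1}` of the moment map
extend continuously across `Z₁ = 0`.) -/
theorem moment_map_entry_tendsto_neg_two (c : ℝ) (hc : 0 < c) :
    Tendsto
      (fun q : HQ =>
        (‖q‖ ^ 2)⁻¹ •
          (star q * (((Real.cos (π * (c / (c + ‖q‖ ^ 2))) : ℝ) : HQ) +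
              ((Real.sin (π * (c / (c + ‖q‖ ^ 2))) : ℝ) : HQ) * quatI) * q -
            ((‖q‖ ^ 2 : ℝ) : HQ)))
      (nhdsWithin 0 {0}ᶜ) (nhds (-2)) := by
  set θ : HQ → ℝ := fun q => π * (c / (c + ‖q‖ ^ 2)) with hθdef
  have hθ : Tendsto θ (nhdsWithin 0 {0}ᶜ) (nhds π) := by
    have hcont : ContinuousAt θ 0 := by
      apply ContinuousAt.mul continuousAt_const
      exact ContinuousAt.div continuousAt_const
        (by fun_prop) (by simp [hc.ne'])
    have h0 : θ 0 = π := by simp [hθdef, hc.ne']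
    exact h0 ▸ hcont.continuousWithinAt.tendsto
  have hg : Tendsto (fun q : HQ => |Real.cos (θ q) + 1| + |Real.sin (θ q)|)
      (nhdsWithin 0 {0}ᶜ) (nhds 0) := by
    have : Tendsto (fun x : ℝ => |Real.cos x + 1| + |Real.sin x|) (nhds π) (nhds 0) := by
      have hc0 : Continuous (fun x : ℝ => |Real.cos x + 1| + |Real.sin x|) := by fun_prop
      have := hc0.tendsto π
      simpa using this
    exact this.comp hθ
  rw [tendsto_iff_norm_sub_tendsto_zero]
  apply squeeze_zero' (Eventually.of_forall fun q => norm_nonneg _) _ hg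
  filter_upwards [self_mem_nhdsWithin] with q hq
  exact key_bound q hq (Real.cos (θ q)) (Real.sin (θ q))
end
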